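/- With cos α = t₂/2, sin α = √(4−t₂²)/2 (t₂ ∈ (−2,2)), a₁ defined by −i a₁ = (1/2)(t₁₂ − i(t₁₂ cos α − t₁)/sin α) and a₂ defined by i·conj(a₂) = (1/2)(t₃ + i(t₃ cos α − t₂₃)/sin α), one has 2Re(a₂·conj(a₁)) = (2t₁t₂₃ + 2t₃t₁₂ − t₁t₂t₃ − t₂t₁₂t₂₃)/(4 − t₂²). -/

import Mathlib

theorem stmt_8 (t₁ t₂ t₃ t₁₂ t₂₃ : ℝ) (h₂ : t₂ ∈ Set.Ioo (-2 : ℝ) 2) (a₁ a₂ : ℂ)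
    (ha₁ : -Complex.I * a₁
      = (1/2) * ((t₁₂ : ℂ) - Complex.I *
          (((t₁₂ * (t₂/2) - t₁) / (Real.sqrt (4 - t₂^2) / 2) : ℝ) : ℂ)))
    (ha₂ : Complex.I * starRingEnd ℂ a₂
      = (1/2) * ((t₃ : ℂ) + Complex.I *
          (((t₃ * (t₂/2) - t₂₃) / (Real.sqrt (4 - t₂^2) / 2) : ℝ) : ℂ))) :
    2 * (a₂ * starRingEnd ℂ a₁).re
      = (2*t₁*t₂₃ + 2*t₃*t₁₂ - t₁*t₂*t₃ - t₂*t₁₂*t₂₃) / (4 - t₂^2) := by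
  obtain ⟨hl, hr⟩ := h₂
  have hpos : (0:ℝ) < 4 - t₂^2 := by nlinarith
  set s := Real.sqrt (4 - t₂^2) with hsdef
  have hs : 0 < s := Real.sqrt_pos.mpr hpos
  have hs2 : s^2 = 4 - t₂^2 := Real.sq_sqrt hpos.le
  have h1 := congrArg Complex.re ha₁
  have h2 := congrArg Complex.im ha₁
  have h3 := congrArg Complex.re ha₂
  have h4 := congrArg Complex.im ha₂
  simp [Complex.ext_iff, Complex.mul_re, Complex.mul_im] at h1 h2 h3 h4
  norm_cast at h1 h2 h3 h4
  simp only [← Complex.ofReal_ofNat, ← Complex.ofReal_mul, ← Complex.ofReal_div, ← Complex.ofReal_sub,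
    Complex.ofReal_im, Complex.ofReal_re] at h1 h2 h3 h4
  rw [Complex.mul_re, Complex.conj_re, Complex.conj_im]
  have e1 : a₁.im = t₁₂ / 2 := by linarith
  have e2 : a₁.re = (t₁₂ * (t₂/2) - t₁) / (s / 2) / 2 := by linarith
  have e3 : a₂.im = t₃ / 2 := by linarith
  have e4 : a₂.re = (t₃ * (t₂/2) - t₂₃) / (s / 2) / 2 := by linarith
  rw [e1, e2, e3, e4]
  field_simp
  linear_combination (8*t₃*t₁₂*(4-t₂^2) - 16*(2*t₁*t₂₃ + 2*t₃*t₁₂ - t₁*t₂*t₃ - t₂*t₁₂*t₂₃)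
    + 7*(4*t₁*t₂₃ - 2*t₁*t₂*t₃ + t₂^2*t₃*t₁₂ - 2*t₂*t₁₂*t₂₃)) * hs2
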